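/- Let H and K be Hilbert spaces with orthogonal decompositions H = ⊕_{j∈J} H_j and K = ⊕_{k∈K'} K_k (families of pairwise orthogonal closed subspaces whose closed linear span is the whole space). Let T : H → K be a bounded linear operator and for each j ∈ J, k ∈ K' let T_{kj} = P_k ∘ T ∘ ι_j : H_j → K_k, where ι_j is the inclusion of H_j and P_k is the orthogonal projection onto K_k. Suppose A : ℓ²(J) → ℓ²(K') is a bounded linear operator whose matrix coefficients with respect to the standard orthonormal bases satisfy ⟨A δ_j, δ_k⟩ = ‖T_{kj}‖ for all j ∈ J and k ∈ K'. Then ‖T‖ ≤ ‖A‖. -/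

import Mathlib

open scoped ENNReal InnerProductSpace

set_option maxHeartbeats 1000000

private lemma lp_orthonormal_single {ι : Type*} [DecidableEq ι] :
    Orthonormal ℂ (fun i : ι => lp.single 2 i (1 : ℂ)) := by
  rw [orthonormal_iff_ite]
  intro i j
  rw [lp.inner_single_left]
  by_cases h : i = j
  · subst h; simp [lp.single_apply_self, RCLike.inner_apply]
  · simp [lp.single_apply_ne _ _ _ h, RCLike.inner_apply, h]

/-- norm of a sum of pairwise-orthogonal vectors -/
private lemma inner_self_sum_orth {E : Type*} [NormedAddCommGroup E]
    [InnerProductSpace ℂ E] {ι : Type*} (s : Finset ι) (f : ι → E)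
    (horth : ∀ i ∈ s, ∀ j ∈ s, i ≠ j → ⟪f i, f j⟫_ℂ = 0) :
    ⟪∑ i ∈ s, f i, ∑ i ∈ s, f i⟫_ℂ = ∑ i ∈ s, (‖f i‖ : ℂ) ^ 2 := by
  rw [sum_inner]
  refine Finset.sum_congr rfl fun i hi => ?_
  rw [inner_sum, Finset.sum_eq_single_of_mem i hi
    (fun j hj hne => horth i hi j hj (Ne.symm hne) ▸ rfl)]
  · exact inner_self_eq_norm_sq_to_K (f i)
  


private lemma block_bound {H K : Type*} [NormedAddCommGroup H] [InnerProductSpace ℂ H]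
    [NormedAddCommGroup K] [InnerProductSpace ℂ K]
    (Hj : Submodule ℂ H) (Kk : Submodule ℂ K) [CompleteSpace Kk]
    (T : H →L[ℂ] K) {x : H} {y : K} (hx : x ∈ Hj) (hy : y ∈ Kk) :
    ‖⟪T x, y⟫_ℂ‖ ≤ ‖(Kk.orthogonalProjection).comp (T.comp Hj.subtypeL)‖ * ‖x‖ * ‖y‖ := by
  have hgk : ⟪T x, y⟫_ℂ = ⟪Kk.orthogonalProjection (T x), (⟨y, hy⟩ : Kk)⟫_ℂ :=
    (Kk.inner_orthogonalProjectionOnto_eq_of_mem_right (⟨y, hy⟩ : Kk) (T x)).symm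
  have happ : Kk.orthogonalProjection (T x) =
      ((Kk.orthogonalProjection).comp (T.comp Hj.subtypeL)) ⟨x, hx⟩ := rfl
  rw [hgk, happ]
  calc ‖⟪((Kk.orthogonalProjection).comp (T.comp Hj.subtypeL)) ⟨x, hx⟩, (⟨y, hy⟩ : Kk)⟫_ℂ‖
      ≤ ‖((Kk.orthogonalProjection).comp (T.comp Hj.subtypeL)) ⟨x, hx⟩‖ * ‖(⟨y, hy⟩ : Kk)‖ :=
        norm_inner_le_norm _ _
    _ ≤ (‖(Kk.orthogonalProjection).comp (T.comp Hj.subtypeL)‖ * ‖(⟨x, hx⟩ : Hj)‖)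
          * ‖(⟨y, hy⟩ : Kk)‖ := by
        gcongr
        exact ContinuousLinearMap.le_opNorm _ _
    _ = ‖(Kk.orthogonalProjection).comp (T.comp Hj.subtypeL)‖ * ‖x‖ * ‖y‖ := rfl

/-- Lemma B of Ramagge–Robertson–Steger (first inequality): if `T : H → K` is a
bounded operator between Hilbert spaces with orthogonal decompositions
`H = ⊕ⱼ Hⱼ`, `K = ⊕ₖ Kₖ`, with blocks `T_{kj} = Pₖ ∘ T ∘ ιⱼ`, and if
`A : ℓ²(J) → ℓ²(K')` is a bounded operator whose matrix coefficients are
`⟨A δⱼ, δₖ⟩ = ‖T_{kj}‖`, then `‖T‖ ≤ ‖A‖`. -/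
theorem opNorm_le_opNorm_of_matrix_of_block_opNorms
    {H K : Type*}
    [NormedAddCommGroup H] [InnerProductSpace ℂ H] [CompleteSpace H]
    [NormedAddCommGroup K] [InnerProductSpace ℂ K] [CompleteSpace K]
    {J K' : Type*} [DecidableEq J] [DecidableEq K']
    (Hsub : J → Submodule ℂ H) (Ksub : K' → Submodule ℂ K)
    [∀ j, CompleteSpace (Hsub j)] [∀ k, CompleteSpace (Ksub k)]
    (hHorth : ∀ i j, i ≠ j → ∀ x ∈ Hsub i, ∀ y ∈ Hsub j, ⟪x, y⟫_ℂ = 0)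
    (hKorth : ∀ i j, i ≠ j → ∀ x ∈ Ksub i, ∀ y ∈ Ksub j, ⟪x, y⟫_ℂ = 0)
    (hHspan : (⨆ j, Hsub j).topologicalClosure = ⊤)
    (hKspan : (⨆ k, Ksub k).topologicalClosure = ⊤)
    (T : H →L[ℂ] K)
    (A : lp (fun _ : J => ℂ) 2 →L[ℂ] lp (fun _ : K' => ℂ) 2)
    (hA : ∀ (j : J) (k : K'),
      ⟪A (lp.single 2 j (1 : ℂ)), lp.single 2 k (1 : ℂ)⟫_ℂ =
        (‖((Ksub k).orthogonalProjection).comp (T.comp (Hsub j).subtypeL)‖ : ℂ)) :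
    ‖T‖ ≤ ‖A‖ := by
  classical
  set eJ : J → lp (fun _ : J => ℂ) 2 := fun j => lp.single 2 j (1 : ℂ) with heJ
  set eK : K' → lp (fun _ : K' => ℂ) 2 := fun k => lp.single 2 k (1 : ℂ) with heK
  -- the key inequality on the dense subspaces
  have key0 : ∀ x ∈ ⨆ j, Hsub j, ∀ y ∈ ⨆ k, Ksub k,
      ‖⟪T x, y⟫_ℂ‖ ≤ ‖A‖ * ‖x‖ * ‖y‖ := by
    intro x hx y hy
    obtain ⟨f, hf, rfl⟩ := (Submodule.mem_iSup_iff_exists_finsupp _ _).mp hx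
    obtain ⟨g, hg, rfl⟩ := (Submodule.mem_iSup_iff_exists_finsupp _ _).mp hy
    rw [Finsupp.sum, Finsupp.sum]
    set s := f.support
    set t := g.support
    set a : lp (fun _ : J => ℂ) 2 := ∑ j ∈ s, (‖f j‖ : ℂ) • eJ j with ha
    set b : lp (fun _ : K' => ℂ) 2 := ∑ k ∈ t, (‖g k‖ : ℂ) • eK k with hb
    -- norms of a and b
    have hnormx : ‖∑ j ∈ s, f j‖ = ‖a‖ := by
      have h1 : ⟪∑ j ∈ s, f j, ∑ j ∈ s, f j⟫_ℂ = ∑ j ∈ s, (‖f j‖ : ℂ) ^ 2 :=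
        inner_self_sum_orth s f fun i _ j _ hne => hHorth i j hne _ (hf i) _ (hf j)
      have h2 : ⟪a, a⟫_ℂ = ∑ j ∈ s, (‖f j‖ : ℂ) ^ 2 := by
        rw [ha, lp_orthonormal_single.inner_sum]
        refine Finset.sum_congr rfl fun j _ => ?_
        rw [Complex.conj_ofReal, sq]
      have h4 : ‖∑ j ∈ s, f j‖ ^ 2 = ‖a‖ ^ 2 := by
        rw [← inner_self_eq_norm_sq (𝕜 := ℂ), ← inner_self_eq_norm_sq (𝕜 := ℂ), h1, h2]
      nlinarith [norm_nonneg (∑ j ∈ s, f j), norm_nonneg a]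
    have hnormy : ‖∑ k ∈ t, g k‖ = ‖b‖ := by
      have h1 : ⟪∑ k ∈ t, g k, ∑ k ∈ t, g k⟫_ℂ = ∑ k ∈ t, (‖g k‖ : ℂ) ^ 2 :=
        inner_self_sum_orth t g fun i _ j _ hne => hKorth i j hne _ (hg i) _ (hg j)
      have h2 : ⟪b, b⟫_ℂ = ∑ k ∈ t, (‖g k‖ : ℂ) ^ 2 := by
        rw [hb, lp_orthonormal_single.inner_sum]
        refine Finset.sum_congr rfl fun k _ => ?_
        rw [Complex.conj_ofReal, sq]
      have h4 : ‖∑ k ∈ t, g k‖ ^ 2 = ‖b‖ ^ 2 := by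
        rw [← inner_self_eq_norm_sq (𝕜 := ℂ), ← inner_self_eq_norm_sq (𝕜 := ℂ), h1, h2]
      nlinarith [norm_nonneg (∑ k ∈ t, g k), norm_nonneg b]
    -- blockwise bound
    have hblock : ∀ j ∈ s, ∀ k ∈ t, ‖⟪T (f j), g k⟫_ℂ‖ ≤
        ‖((Ksub k).orthogonalProjection).comp (T.comp (Hsub j).subtypeL)‖ * ‖f j‖ * ‖g k‖ :=
      fun j _ k _ => block_bound (Hsub j) (Ksub k) T (hf j) (hg k)
    -- the matrix pairing
    have hAab : ⟪A a, b⟫_ℂ = ∑ j ∈ s, ∑ k ∈ t,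
        ((‖((Ksub k).orthogonalProjection).comp (T.comp (Hsub j).subtypeL)‖
          * ‖f j‖ * ‖g k‖ : ℝ) : ℂ) := by
      rw [ha, hb, map_sum, sum_inner]
      refine Finset.sum_congr rfl fun j _ => ?_
      rw [map_smul, inner_smul_left, inner_sum, Finset.mul_sum]
      refine Finset.sum_congr rfl fun k _ => ?_
      rw [inner_smul_right, hA j k, Complex.conj_ofReal]
      push_cast
      ring
    -- the main estimate
    have hTsum : ⟪T (∑ j ∈ s, f j), ∑ k ∈ t, g k⟫_ℂ =
        ∑ j ∈ s, ∑ k ∈ t, ⟪T (f j), g k⟫_ℂ := by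
      rw [map_sum, sum_inner]
      exact Finset.sum_congr rfl fun j _ => inner_sum _ _ _
    set S : ℝ := ∑ j ∈ s, ∑ k ∈ t,
      ‖((Ksub k).orthogonalProjection).comp (T.comp (Hsub j).subtypeL)‖ * ‖f j‖ * ‖g k‖ with hS
    have hS0 : 0 ≤ S := by
      refine Finset.sum_nonneg fun j _ => Finset.sum_nonneg fun k _ => ?_
      positivity
    have hstep1 : ‖⟪T (∑ j ∈ s, f j), ∑ k ∈ t, g k⟫_ℂ‖ ≤ S := by
      rw [hTsum, hS]
      refine (norm_sum_le _ _).trans ?_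
      refine Finset.sum_le_sum fun j hj => ?_
      refine (norm_sum_le _ _).trans ?_
      exact Finset.sum_le_sum fun k hk => hblock j hj k hk
    have hSeq : (S : ℂ) = ⟪A a, b⟫_ℂ := by
      rw [hAab, hS]
      push_cast
      ring
    have hstep2 : S ≤ ‖A‖ * ‖a‖ * ‖b‖ := by
      have : S = ‖⟪A a, b⟫_ℂ‖ := by
        rw [← hSeq, Complex.norm_real, Real.norm_eq_abs, abs_of_nonneg hS0]
      rw [this]
      calc ‖⟪A a, b⟫_ℂ‖ ≤ ‖A a‖ * ‖b‖ := norm_inner_le_norm _ _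
        _ ≤ ‖A‖ * ‖a‖ * ‖b‖ := by gcongr; exact A.le_opNorm _
    rw [hnormx, hnormy]
    exact hstep1.trans hstep2
  -- extend by density in the first variable
  have dH : Dense ((⨆ j, Hsub j : Submodule ℂ H) : Set H) :=
    Submodule.dense_iff_topologicalClosure_eq_top.mpr hHspan
  have dK : Dense ((⨆ k, Ksub k : Submodule ℂ K) : Set K) :=
    Submodule.dense_iff_topologicalClosure_eq_top.mpr hKspan
  have key1 : ∀ (x : H), ∀ y ∈ ⨆ k, Ksub k, ‖⟪T x, y⟫_ℂ‖ ≤ ‖A‖ * ‖x‖ * ‖y‖ := by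
    intro x y hy
    have hcl : IsClosed {x : H | ‖⟪T x, y⟫_ℂ‖ ≤ ‖A‖ * ‖x‖ * ‖y‖} := by
      refine isClosed_le ?_ ?_
      · exact (T.continuous.inner continuous_const).norm
      · exact (continuous_const.mul continuous_norm).mul continuous_const
    have hsub : ((⨆ j, Hsub j : Submodule ℂ H) : Set H) ⊆
        {x : H | ‖⟪T x, y⟫_ℂ‖ ≤ ‖A‖ * ‖x‖ * ‖y‖} :=
      fun x hx => key0 x hx y hy
    have := closure_minimal hsub hcl
    exact this (dH x)
  have key : ∀ (x : H) (y : K), ‖⟪T x, y⟫_ℂ‖ ≤ ‖A‖ * ‖x‖ * ‖y‖ := by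
    intro x y
    have hcl : IsClosed {y : K | ‖⟪T x, y⟫_ℂ‖ ≤ ‖A‖ * ‖x‖ * ‖y‖} := by
      refine isClosed_le ?_ ?_
      · exact (continuous_const.inner continuous_id).norm
      · exact (continuous_const.mul continuous_const).mul continuous_norm
    have hsub : ((⨆ k, Ksub k : Submodule ℂ K) : Set K) ⊆
        {y : K | ‖⟪T x, y⟫_ℂ‖ ≤ ‖A‖ * ‖x‖ * ‖y‖} :=
      fun y hy => key1 x y hy
    have := closure_minimal hsub hcl
    exact this (dK y)
  refine T.opNorm_le_bound (norm_nonneg A) fun x => ?_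
  have h := key x (T x)
  rw [inner_self_eq_norm_sq_to_K] at h
  have h2 : ‖T x‖ ^ 2 ≤ ‖A‖ * ‖x‖ * ‖T x‖ := by
    calc ‖T x‖ ^ 2 = ‖((‖T x‖ : ℂ)) ^ 2‖ := by
          rw [norm_pow, Complex.norm_real, Real.norm_eq_abs, abs_of_nonneg (norm_nonneg _)]
      _ ≤ ‖A‖ * ‖x‖ * ‖T x‖ := h
  rcases eq_or_lt_of_le (norm_nonneg (T x)) with h0 | h0
  · rw [← h0]; positivity
  · nlinarith
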